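/- Let (A,C,ψ) be an entwining structure and r ≥ 1. The generalized trace tr: C ⊗ M_r(A)^{⊗(n+1)} → C ⊗ A^{⊗(n+1)}, tr(c ⊗ a₁u₁ ⊗ ... ⊗ a_{n+1}u_{n+1}) = tr(u₁ ⋯ u_{n+1}) · (c ⊗ a₁ ⊗ ... ⊗ a_{n+1}) (for aᵢ ∈ A, uᵢ ∈ M_r(k)), commutes with all face maps d_i of the presimplicial modules C_•(M_r(A),C,ψ) and C_•(A,C,ψ), where d₀(c, x₁,...,x_{n+1}) = (c^ψ, x₂,...,x_{n+1}x_{1ψ}) and d_i(c, x₁,...,x_{n+1}) = (c, x₁,...,x_i x_{i+1},...,x_{n+1}) for 0 < i ≤ n. Hence tr is a morphism of complexes. -/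

import Mathlib

open TensorProduct

/-- An entwining structure `(A, C, ψ)` over a field `k`: a unital `k`-algebra `A`,
a counital `k`-coalgebra `C` and a `k`-linear map `ψ : C ⊗ A → A ⊗ C` satisfying the
entwining axioms of Brzeziński–Majid. -/
structure Entwining (k A C : Type) [Field k] [Ring A] [Algebra k A]
    [AddCommGroup C] [Module k C] [Coalgebra k C] : Type where
  ψ : C ⊗[k] A →ₗ[k] A ⊗[k] C
  mul_compat : ψ ∘ₗ TensorProduct.map (LinearMap.id : C →ₗ[k] C) (LinearMap.mul' k A) =
    TensorProduct.map (LinearMap.mul' k A) (LinearMap.id : C →ₗ[k] C)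
      ∘ₗ (TensorProduct.assoc k A A C).symm.toLinearMap
      ∘ₗ TensorProduct.map (LinearMap.id : A →ₗ[k] A) ψ
      ∘ₗ (TensorProduct.assoc k A C A).toLinearMap
      ∘ₗ TensorProduct.map ψ (LinearMap.id : A →ₗ[k] A)
      ∘ₗ (TensorProduct.assoc k C A A).symm.toLinearMap
  comul_compat : TensorProduct.map (LinearMap.id : A →ₗ[k] A)
        (CoalgebraStruct.comul (R := k) (A := C)) ∘ₗ ψ =
    (TensorProduct.assoc k A C C).toLinearMap
      ∘ₗ TensorProduct.map ψ (LinearMap.id : C →ₗ[k] C)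
      ∘ₗ (TensorProduct.assoc k C A C).symm.toLinearMap
      ∘ₗ TensorProduct.map (LinearMap.id : C →ₗ[k] C) ψ
      ∘ₗ (TensorProduct.assoc k C C A).toLinearMap
      ∘ₗ TensorProduct.map (CoalgebraStruct.comul (R := k) (A := C)) (LinearMap.id : A →ₗ[k] A)
  counit_compat : (TensorProduct.rid k A).toLinearMap
      ∘ₗ TensorProduct.map (LinearMap.id : A →ₗ[k] A)
        (CoalgebraStruct.counit (R := k) (A := C)) ∘ₗ ψ =
    (TensorProduct.lid k A).toLinearMap
      ∘ₗ TensorProduct.map (CoalgebraStruct.counit (R := k) (A := C)) (LinearMap.id : A →ₗ[k] A)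
  unit_compat : ∀ c : C, ψ (c ⊗ₜ[k] (1 : A)) = (1 : A) ⊗ₜ[k] c

open PiTensorProduct

/-- The vector `(a₁, …, aᵢaᵢ₊₁, …, a_{n+2})` obtained by multiplying the adjacent
entries at positions `i, i+1` (0-indexed). -/
def mergeVec {A : Type} [Mul A] {n : ℕ} (v : Fin (n + 2) → A) (i : Fin (n + 1)) :
    Fin (n + 1) → A :=
  fun j => if j.castSucc < i.castSucc then v j.castSucc
    else if j = i then v i.castSucc * v i.succ else v j.succ

/-- `d` realises the `i`-th face map `dᵢ : C ⊗ B^{⊗(m+2)} → C ⊗ B^{⊗(m+1)}` of the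
presimplicial module associated to an entwining map `ψ` on `B`:
`d₀(c, b₁, …, b_{m+2}) = (c^ψ, b₂, …, b_{m+2} b_{1ψ})` (stated for every representation
`ψ(c ⊗ b₁) = Σ αᵢ ⊗ γᵢ`) and `dᵢ(c, b₁, …, b_{m+2}) = (c, b₁, …, bᵢbᵢ₊₁, …, b_{m+2})`
for `0 < i ≤ m + 1`. -/
def IsFaceMap {k B C : Type} [Field k] [Ring B] [Algebra k B] [AddCommGroup C] [Module k C]
    (ψ : C ⊗[k] B →ₗ[k] B ⊗[k] C) {m : ℕ} (i : Fin (m + 2))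
    (d : (C ⊗[k] (⨂[k] (_ : Fin (m + 2)), B)) →ₗ[k] (C ⊗[k] (⨂[k] (_ : Fin (m + 1)), B))) :
    Prop :=
  if h : i = 0 then
    ∀ (c : C) (v : Fin (m + 2) → B) (t : ℕ) (α : Fin t → B) (γ : Fin t → C),
      ψ (c ⊗ₜ[k] v 0) = ∑ s, α s ⊗ₜ[k] γ s →
      d (c ⊗ₜ[k] (PiTensorProduct.tprod k) v) =
        ∑ s, γ s ⊗ₜ[k] (PiTensorProduct.tprod k)
          (Function.update (fun j : Fin (m + 1) => v j.succ) (Fin.last m)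
            (v (Fin.last (m + 1)) * α s))
  else
    ∀ (c : C) (v : Fin (m + 2) → B),
      d (c ⊗ₜ[k] (PiTensorProduct.tprod k) v) =
        c ⊗ₜ[k] (PiTensorProduct.tprod k) (mergeVec v (i.pred h))

/-- `tr` realises the generalized trace map
`C ⊗ M_r(A)^{⊗m} → C ⊗ A^{⊗m}`,
`c ⊗ a₁u₁ ⊗ ⋯ ⊗ a_mu_m ↦ tr(u₁ ⋯ u_m) · (c ⊗ a₁ ⊗ ⋯ ⊗ a_m)` for `aᵢ ∈ A` and
`uᵢ ∈ M_r(k)`. -/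
def IsGenTrace {k A C : Type} [Field k] [Ring A] [Algebra k A] [AddCommGroup C]
    [Module k C] (r : ℕ) {m : ℕ}
    (tr : (C ⊗[k] (⨂[k] (_ : Fin m), Matrix (Fin r) (Fin r) A)) →ₗ[k]
      (C ⊗[k] (⨂[k] (_ : Fin m), A))) : Prop :=
  ∀ (c : C) (a : Fin m → A) (u : Fin m → Matrix (Fin r) (Fin r) k),
    tr (c ⊗ₜ[k] (PiTensorProduct.tprod k)
        (fun i => Matrix.of fun p q => u i p q • a i)) =
      Matrix.trace (List.ofFn u).prod • (c ⊗ₜ[k] (PiTensorProduct.tprod k) a)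



section Aux

variable {k A : Type} [Field k] [Ring A] [Algebra k A] {r : ℕ}

lemma Msm_mul (u u' : Matrix (Fin r) (Fin r) k) (a a' : A) :
    (Matrix.of fun p q => u p q • a) * (Matrix.of fun p q => u' p q • a') =
      Matrix.of fun p q => (u * u') p q • (a * a') := by
  ext p q
  simp only [Matrix.mul_apply, Matrix.of_apply, smul_mul_smul_comm]
  rw [Finset.sum_smul]

lemma stdBasis_eq_Msm (p q : Fin r) (a : A) :
    Matrix.single p q a =
      Matrix.of fun p' q' => Matrix.single p q (1 : k) p' q' • a := by
  ext p' q'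
  simp [Matrix.single, ite_smul]

lemma matrix_eq_sum_Msm (x : Matrix (Fin r) (Fin r) A) :
    x = ∑ pq : Fin r × Fin r,
      Matrix.of fun p' q' => Matrix.single pq.1 pq.2 (1 : k) p' q' • x pq.1 pq.2 := by
  conv_lhs => rw [Matrix.matrix_eq_sum_single x]
  rw [Fintype.sum_prod_type]
  exact Finset.sum_congr rfl fun p _ => Finset.sum_congr rfl fun q _ => stdBasis_eq_Msm p q _

lemma sum_stdBasis_smul (u : Matrix (Fin r) (Fin r) k) (a : A) :
    ∑ pq : Fin r × Fin r, Matrix.single pq.1 pq.2 (u pq.1 pq.2 • a) =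
      Matrix.of fun p q => u p q • a := by
  conv_rhs => rw [Matrix.matrix_eq_sum_single (Matrix.of fun p q => u p q • a)]
  rw [Fintype.sum_prod_type]
  rfl

end Aux




section MV

variable {M : Type} [Mul M]

lemma mergeVec_zero {n : ℕ} (v : Fin (n + 2) → M) :
    mergeVec v 0 = Fin.cons (v 0 * v 1) (fun j : Fin n => v j.succ.succ) := by
  funext j
  refine Fin.cases ?_ (fun j => ?_) j
  · simp [mergeVec]
  · simp [mergeVec, Fin.succ_ne_zero]

lemma mergeVec_succ {n : ℕ} (v : Fin (n + 3) → M) (i : Fin (n + 1)) :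
    mergeVec v i.succ = Fin.cons (v 0) (mergeVec (fun j => v j.succ) i) := by
  funext j
  refine Fin.cases ?_ (fun j => ?_) j
  · simp only [mergeVec, Fin.cons_zero, Fin.castSucc_zero, Fin.castSucc_lt_castSucc_iff,
      Fin.succ_pos, if_true]
    exact if_pos (show (0 : Fin _) < i.succ.castSucc by simp [Fin.lt_def])
  · simp only [mergeVec, Fin.cons_succ, Fin.castSucc_lt_castSucc_iff, Fin.succ_lt_succ_iff,
      Fin.succ_inj, ← Fin.succ_castSucc]

lemma prod_mergeVec {M : Type} [Monoid M] : ∀ {n : ℕ} (v : Fin (n + 2) → M) (i : Fin (n + 1)),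
    (List.ofFn (mergeVec v i)).prod = (List.ofFn v).prod := by
  intro n
  induction n with
  | zero =>
    intro v i
    have hi : i = 0 := Fin.eq_zero i
    subst hi
    rw [mergeVec_zero]
    simp [List.ofFn_succ, mul_assoc]
  | succ n ih =>
    intro v i
    refine Fin.cases ?_ (fun i' => ?_) i
    · rw [mergeVec_zero, List.ofFn_succ (f := Fin.cons (v 0 * v 1) fun j : Fin (n+1) => v j.succ.succ)]
      simp only [Fin.cons_zero, Fin.cons_succ, List.prod_cons]
      rw [List.ofFn_succ (f := v), List.ofFn_succ (f := fun i => v i.succ)]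
      simp only [List.prod_cons, mul_assoc, Fin.succ_zero_eq_one]
    · rw [mergeVec_succ, List.ofFn_succ (f := Fin.cons (v 0) (mergeVec (fun j => v j.succ) i'))]
      simp only [Fin.cons_zero, Fin.cons_succ, List.prod_cons]
      rw [ih, List.ofFn_succ (f := v), List.prod_cons]

end MV

lemma trace_update {k : Type} [Field k] {r : ℕ} {n : ℕ}
    (u : Fin (n + 2) → Matrix (Fin r) (Fin r) k) :
    Matrix.trace (List.ofFn (Function.update (fun j : Fin (n + 1) => u j.succ) (Fin.last n)
      (u (Fin.last (n + 1)) * u 0))).prod = Matrix.trace (List.ofFn u).prod := by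
  rw [List.ofFn_succ (f := u), List.prod_cons, Matrix.trace_mul_comm]
  rw [List.ofFn_succ' (Function.update (fun j : Fin (n + 1) => u j.succ) (Fin.last n)
      (u (Fin.last (n + 1)) * u 0)), List.prod_concat, Function.update_self]
  rw [List.ofFn_succ' (fun i : Fin (n + 1) => u i.succ), List.prod_concat]
  have h1 : ∀ j : Fin n, Function.update (fun j : Fin (n + 1) => u j.succ) (Fin.last n)
      (u (Fin.last (n + 1)) * u 0) j.castSucc = u j.castSucc.succ := fun j =>
    Function.update_of_ne (Fin.castSucc_lt_last j).ne _ _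
  simp only [h1, Fin.succ_last, mul_assoc]

lemma exists_fin_rep {k A C : Type} [Field k] [Ring A] [Algebra k A] [AddCommGroup C]
    [Module k C] (x : A ⊗[k] C) :
    ∃ (t : ℕ) (α : Fin t → A) (γ : Fin t → C), x = ∑ s, α s ⊗ₜ[k] γ s := by
  obtain ⟨S, rfl⟩ := TensorProduct.exists_finset x
  refine ⟨S.card, fun s => (S.equivFin.symm s).1.1, fun s => (S.equivFin.symm s).1.2, ?_⟩
  rw [← Finset.sum_coe_sort S (fun p => p.1 ⊗ₜ[k] p.2)]
  exact (S.equivFin.symm.sum_comp _).symm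


lemma psiM_rep {k A C : Type} [Field k] [Ring A] [Algebra k A] [AddCommGroup C]
    [Module k C] [Coalgebra k C] (e : Entwining k A C) {r : ℕ}
    (ψM : C ⊗[k] Matrix (Fin r) (Fin r) A →ₗ[k] Matrix (Fin r) (Fin r) A ⊗[k] C)
    (hψM : ∀ (c : C) (a : A) (p q : Fin r) (t : ℕ) (α : Fin t → A) (γ : Fin t → C),
      e.ψ (c ⊗ₜ[k] a) = ∑ i, α i ⊗ₜ[k] γ i →
      ψM (c ⊗ₜ[k] Matrix.single p q a) =
        ∑ i, Matrix.single p q (α i) ⊗ₜ[k] γ i)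
    (c : C) (a : A) (u : Matrix (Fin r) (Fin r) k)
    {t : ℕ} {α : Fin t → A} {γ : Fin t → C}
    (hrep : e.ψ (c ⊗ₜ[k] a) = ∑ s, α s ⊗ₜ[k] γ s) :
    ψM (c ⊗ₜ[k] (Matrix.of fun p q => u p q • a)) =
      ∑ s, (Matrix.of fun p q => u p q • α s) ⊗ₜ[k] γ s := by
  have h1 : ∀ κ : k, e.ψ (c ⊗ₜ[k] (κ • a)) = ∑ s, (κ • α s) ⊗ₜ[k] γ s := by
    intro κ
    rw [tmul_smul, map_smul, hrep, Finset.smul_sum]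
    exact Finset.sum_congr rfl fun s _ => (smul_tmul' κ (α s) (γ s)).symm
  have h2 : (Matrix.of fun p q => u p q • a) =
      ∑ pq : Fin r × Fin r, Matrix.single pq.1 pq.2 (u pq.1 pq.2 • a) :=
    (sum_stdBasis_smul u a).symm
  rw [h2, tmul_sum, map_sum]
  have h3 : ∀ pq : Fin r × Fin r,
      ψM (c ⊗ₜ[k] Matrix.single pq.1 pq.2 (u pq.1 pq.2 • a)) =
        ∑ s, Matrix.single pq.1 pq.2 (u pq.1 pq.2 • α s) ⊗ₜ[k] γ s := fun pq =>
    hψM c (u pq.1 pq.2 • a) pq.1 pq.2 t (fun s => u pq.1 pq.2 • α s) γ (h1 _)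
  simp only [h3]
  rw [Finset.sum_comm]
  refine Finset.sum_congr rfl fun s _ => ?_
  rw [← TensorProduct.sum_tmul, sum_stdBasis_smul]

/-- The generalized trace `tr : C ⊗ M_r(A)^{⊗(m+2)} → C ⊗ A^{⊗(m+2)}`
commutes with all the face maps of the presimplicial modules `𝒞_•(M_r(A),C,ψ)` and
`𝒞_•(A,C,ψ)`; hence it is a morphism of complexes. -/
theorem genTrace_chain_map
    [Field k] [Ring A] [Algebra k A] [AddCommGroup C] [Module k C] [Coalgebra k C]
    (e : Entwining k A C) (r : ℕ) (hr : 0 < r)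
    (ψM : C ⊗[k] Matrix (Fin r) (Fin r) A →ₗ[k] Matrix (Fin r) (Fin r) A ⊗[k] C)
    (hψM : ∀ (c : C) (a : A) (p q : Fin r) (t : ℕ) (α : Fin t → A) (γ : Fin t → C),
      e.ψ (c ⊗ₜ[k] a) = ∑ i, α i ⊗ₜ[k] γ i →
      ψM (c ⊗ₜ[k] Matrix.single p q a) =
        ∑ i, Matrix.single p q (α i) ⊗ₜ[k] γ i)
    (m : ℕ)
    (dM : ∀ _ : Fin (m + 2),
      (C ⊗[k] (⨂[k] (_ : Fin (m + 2)), Matrix (Fin r) (Fin r) A)) →ₗ[k]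
        (C ⊗[k] (⨂[k] (_ : Fin (m + 1)), Matrix (Fin r) (Fin r) A)))
    (dA : ∀ _ : Fin (m + 2),
      (C ⊗[k] (⨂[k] (_ : Fin (m + 2)), A)) →ₗ[k] (C ⊗[k] (⨂[k] (_ : Fin (m + 1)), A)))
    (hdM : ∀ i : Fin (m + 2), IsFaceMap ψM i (dM i))
    (hdA : ∀ i : Fin (m + 2), IsFaceMap e.ψ i (dA i))
    (trHigh : (C ⊗[k] (⨂[k] (_ : Fin (m + 2)), Matrix (Fin r) (Fin r) A)) →ₗ[k]
      (C ⊗[k] (⨂[k] (_ : Fin (m + 2)), A)))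
    (trLow : (C ⊗[k] (⨂[k] (_ : Fin (m + 1)), Matrix (Fin r) (Fin r) A)) →ₗ[k]
      (C ⊗[k] (⨂[k] (_ : Fin (m + 1)), A)))
    (htrHigh : IsGenTrace r trHigh) (htrLow : IsGenTrace r trLow) :
    ∀ i : Fin (m + 2), dA i ∘ₗ trHigh = trLow ∘ₗ dM i := by
  intro i
  have key : ∀ (c : C) (u : Fin (m + 2) → Matrix (Fin r) (Fin r) k) (a : Fin (m + 2) → A),
      dA i (trHigh (c ⊗ₜ[k] (PiTensorProduct.tprod k)
        (fun j => Matrix.of fun p q => u j p q • a j))) =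
      trLow (dM i (c ⊗ₜ[k] (PiTensorProduct.tprod k)
        (fun j => Matrix.of fun p q => u j p q • a j))) := by
    intro c u a
    by_cases h : i = 0
    · subst h
      obtain ⟨t, α, γ, hrep⟩ := exists_fin_rep (e.ψ (c ⊗ₜ[k] a 0))
      have hA := hdA 0
      rw [IsFaceMap, dif_pos rfl] at hA
      have hM := hdM 0
      rw [IsFaceMap, dif_pos rfl] at hM
      have hψrep := psiM_rep e ψM hψM c (a 0) (u 0) hrep
      rw [htrHigh c a u, map_smul, hA c a t α γ hrep]
      rw [hM c _ t (fun s => Matrix.of fun p q => u 0 p q • α s) γ hψrep, map_sum,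
        Finset.smul_sum]
      refine Finset.sum_congr rfl fun s _ => ?_
      have hupd : (Function.update
          (fun j : Fin (m + 1) => Matrix.of fun p q => u j.succ p q • a j.succ) (Fin.last m)
          ((Matrix.of fun p q => u (Fin.last (m + 1)) p q • a (Fin.last (m + 1))) *
            (Matrix.of fun p q => u 0 p q • α s))) =
          fun j => Matrix.of fun p q =>
            (Function.update (fun j : Fin (m + 1) => u j.succ) (Fin.last m)
              (u (Fin.last (m + 1)) * u 0)) j p q •
            (Function.update (fun j : Fin (m + 1) => a j.succ) (Fin.last m)
              (a (Fin.last (m + 1)) * α s)) j := by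
        funext j
        rcases eq_or_ne j (Fin.last m) with hj | hj
        · subst hj
          simp only [Function.update_self]
          exact Msm_mul _ _ _ _
        · simp only [Function.update_of_ne hj]
      rw [hupd, htrLow (γ s) _ _, trace_update]
    · have hA := hdA i
      rw [IsFaceMap, dif_neg h] at hA
      have hM := hdM i
      rw [IsFaceMap, dif_neg h] at hM
      rw [htrHigh c a u, map_smul, hA c a, hM c _]
      have hmv : mergeVec (fun j => Matrix.of fun p q => u j p q • a j) (i.pred h) =
          fun j => Matrix.of fun p q =>
            mergeVec u (i.pred h) j p q • mergeVec a (i.pred h) j := by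
        funext j
        unfold mergeVec
        split_ifs with h1 h2
        · rfl
        · exact Msm_mul _ _ _ _
        · rfl
      rw [hmv, htrLow c (mergeVec a (i.pred h)) (mergeVec u (i.pred h)), prod_mergeVec]
  refine TensorProduct.ext' fun c z => ?_
  simp only [LinearMap.comp_apply]
  induction z using PiTensorProduct.induction_on with
  | smul_tprod κ v =>
    have hv : (PiTensorProduct.tprod k) v = ∑ σ : Fin (m + 2) → Fin r × Fin r,
        (PiTensorProduct.tprod k) fun j => Matrix.of fun p q =>
          Matrix.single (σ j).1 (σ j).2 (1 : k) p q • v j (σ j).1 (σ j).2 := by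
      conv_lhs => rw [show v = fun j => ∑ pq : Fin r × Fin r, Matrix.of
          (fun p' q' => Matrix.single pq.1 pq.2 (1 : k) p' q' • v j pq.1 pq.2) from
        funext fun j => matrix_eq_sum_Msm (v j)]
      exact MultilinearMap.map_sum _ _
    rw [tmul_smul, map_smul, map_smul, map_smul, map_smul, hv, tmul_sum, map_sum, map_sum,
      map_sum, map_sum]
    congr 1
    exact Finset.sum_congr rfl fun σ _ =>
      key c (fun j => Matrix.single (σ j).1 (σ j).2 1) (fun j => v j (σ j).1 (σ j).2)
  | add x y hx hy =>
    rw [tmul_add, map_add, map_add, map_add, map_add, hx, hy]
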